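/- Any d-cycle-complete simplicial complex is orientably-d-cycle-complete; that is, if Γ is a pure d-dimensional simplicial complex in which every vertex-minimal d-dimensional cycle is d-complete, then every orientably-vertex-minimal d-dimensional cycle in Γ is d-complete. -/

import Mathlib

open Finset

namespace ChordedPaper

variable {V : Type*} [DecidableEq V] [Fintype V]

/-- A simplicial complex: a set of finsets (faces) closed under taking subsets.
(The vertices of the complex are the vertices of its faces, so all singletons of
vertices are automatically faces.) -/
def IsComplex (K : Set (Finset V)) : Prop :=
  ∀ F ∈ K, ∀ G ⊆ F, G ∈ K

/-- The vertex set `V(K)` of a complex. -/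
def verts (K : Set (Finset V)) : Set V :=
  {v | ∃ F ∈ K, v ∈ F}

/-- The `d`-dimensional faces (cardinality `d+1`) of `K`. -/
def dfaces (K : Set (Finset V)) (d : ℕ) : Set (Finset V) :=
  {F | F ∈ K ∧ F.card = d + 1}

/-- `K` is pure `d`-dimensional: every face is contained in a `d`-face. -/
def IsPureD (K : Set (Finset V)) (d : ℕ) : Prop :=
  ∀ F ∈ K, ∃ G ∈ dfaces K d, F ⊆ G

/-- The complex generated by a set of facets. -/
def gen (S : Set (Finset V)) : Set (Finset V) :=
  {G | ∃ F ∈ S, G ⊆ F}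

/-- The pure `d`-skeleton `K^{[d]}`: the complex whose facets are the `d`-faces of `K`. -/
def skel (K : Set (Finset V)) (d : ℕ) : Set (Finset V) :=
  gen (dfaces K d)

/-- The induced subcomplex `K_W` on a set `W` of vertices. -/
def induced (K : Set (Finset V)) (W : Set V) : Set (Finset V) :=
  {F | F ∈ K ∧ ↑F ⊆ W}

/-- Two `d`-faces of `S` are adjacent in a `d`-path if they share `d` vertices. -/
def adj (S : Set (Finset V)) (d : ℕ) (F G : Finset V) : Prop :=
  F ∈ S ∧ G ∈ S ∧ (F ∩ G).card = d

/-- `d`-path-connectedness: any two `d`-faces are joined by a `d`-path. -/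
def PathConn (K : Set (Finset V)) (d : ℕ) : Prop :=
  ∀ F ∈ dfaces K d, ∀ G ∈ dfaces K d, Relation.ReflTransGen (adj (dfaces K d) d) F G

/-- A `d`-dimensional cycle: a pure `d`-dimensional, `d`-path-connected complex in which
every `(d-1)`-face lies in an even number of `d`-faces. -/
def IsCycle (Ω : Set (Finset V)) (d : ℕ) : Prop :=
  IsComplex Ω ∧ IsPureD Ω d ∧ (dfaces Ω d).Nonempty ∧ PathConn Ω d ∧
    ∀ f ∈ Ω, Finset.card f = d → Even {F | F ∈ dfaces Ω d ∧ f ⊆ F}.ncard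

/-- A `d`-dimensional cycle in the complex `Γ`. -/
def CycleIn (Γ Ω : Set (Finset V)) (d : ℕ) : Prop :=
  Ω ⊆ Γ ∧ IsCycle Ω d

/-- Face-minimality: no strict subset of the `d`-faces of `Ω` forms a `d`-dimensional cycle. -/
def FaceMinimal (Ω : Set (Finset V)) (d : ℕ) : Prop :=
  ∀ S : Set (Finset V), S ⊂ dfaces Ω d → ¬ IsCycle (gen S) d

/-- Vertex-minimality of a cycle `Ω` in `Γ`: no `d`-dimensional cycle in `Γ` lies on a
strict subset of the vertices of `Ω`. -/
def VertexMinimal (Γ Ω : Set (Finset V)) (d : ℕ) : Prop :=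
  ∀ Ω', CycleIn Γ Ω' d → ¬ (verts Ω' ⊂ verts Ω)

/-- `d`-completeness: every `(d+1)`-subset of the vertex set is a face. -/
def DComplete (K : Set (Finset V)) (d : ℕ) : Prop :=
  ∀ S : Finset V, ↑S ⊆ verts K → S.card = d + 1 → S ∈ K

/-- A chord set `C` of the `d`-dimensional cycle `Ω` in `Γ`. -/
def ChordSet (Γ Ω : Set (Finset V)) (d : ℕ) (C : Set (Finset V)) : Prop :=
  C ⊆ dfaces Γ d ∧ (∀ F ∈ C, F ∉ Ω) ∧ (∀ F ∈ C, ↑F ⊆ verts Ω) ∧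
    ∃ (n : ℕ) (Ωi : Fin n → Set (Finset V)), 2 ≤ n ∧ (∀ i, IsCycle (Ωi i) d) ∧
      (⋃ i, dfaces (Ωi i) d) = dfaces Ω d ∪ C ∧
      (∀ F ∈ C, Even {i | F ∈ dfaces (Ωi i) d}.ncard) ∧
      (∀ F ∈ dfaces Ω d, Odd {i | F ∈ dfaces (Ωi i) d}.ncard) ∧
      (∀ i, (verts (Ωi i)).ncard < (verts Ω).ncard)

/-- `Γ` is `d`-chorded: every face-minimal `d`-dimensional cycle in `Γ` that is not
`d`-complete has a chord set in `Γ`. -/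
def DChorded (Γ : Set (Finset V)) (d : ℕ) : Prop :=
  ∀ Ω, CycleIn Γ Ω d → FaceMinimal Ω d → ¬ DComplete Ω d → ∃ C, ChordSet Γ Ω d C

/-- `Γ` is `d`-cycle-complete: every vertex-minimal `d`-dimensional cycle in `Γ` is
`d`-complete. -/
def DCycleComplete (Γ : Set (Finset V)) (d : ℕ) : Prop :=
  ∀ Ω, CycleIn Γ Ω d → VertexMinimal Γ Ω d → DComplete Ω d

/-- The `d`-closure `Δ_d(K)` of the complex `K`, relative to the vertex set `W`:
it contains the faces of `K`, all subsets of `W` of size at most `d`, and every subset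
`S` of `W` with `|S| > d+1` all of whose `(d+1)`-subsets are faces of `K`. -/
def closure (W : Set V) (K : Set (Finset V)) (d : ℕ) : Set (Finset V) :=
  K ∪ {S | ↑S ⊆ W ∧ S.card ≤ d} ∪
    {S | ↑S ⊆ W ∧ d + 1 < S.card ∧ ∀ T ⊆ S, T.card = d + 1 → T ∈ K}

/-- A `d`-dimensional tree: a pure `d`-dimensional complex with no `d`-dimensional cycles. -/
def IsTree (K : Set (Finset V)) (d : ℕ) : Prop :=
  IsComplex K ∧ IsPureD K d ∧ ∀ Ω, ¬ CycleIn K Ω d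

/-- The unsigned boundary map on chains (appropriate over rings of characteristic 2):
a face is sent to the sum of the faces obtained by deleting one vertex. -/
noncomputable def ubd {R : Type*} [AddCommMonoid R] (c : Finset V →₀ R) : Finset V →₀ R :=
  c.sum fun F a => F.sum fun v => Finsupp.single (F.erase v) a

/-- The signed (oriented) boundary map on chains, the vertices of each face being listed
in increasing order. -/
noncomputable def sbd [LinearOrder V] {R : Type*} [Ring R] (c : Finset V →₀ R) : Finset V →₀ R :=
  c.sum fun F a =>
    F.sum fun v => Finsupp.single (F.erase v) ((-1 : R) ^ (F.filter fun w => w < v).card * a)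

/-- `c` is an `i`-chain on the complex `K`: it is supported on `i`-faces of `K`. -/
def ChainOn {R : Type*} [Zero R] (K : Set (Finset V)) (i : ℕ) (c : Finset V →₀ R) : Prop :=
  ∀ F ∈ c.support, F ∈ K ∧ F.card = i + 1

/-- Vanishing of the reduced simplicial homology `H̃_i(K; R)` for the unsigned boundary
map (this is reduced simplicial homology when `R` has characteristic 2): every `i`-chain
with vanishing boundary (for `i = 0`, the boundary at the empty face is the augmentation ε)
is the boundary of an `(i+1)`-chain. -/
def RedHomZeroU (K : Set (Finset V)) (R : Type*) [AddCommMonoid R] (i : ℕ) : Prop :=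
  ∀ c : Finset V →₀ R, ChainOn K i c → ubd c = 0 →
    ∃ b : Finset V →₀ R, ChainOn K (i + 1) b ∧ ubd b = c

/-- Vanishing of the reduced simplicial homology `H̃_i(K; R)` (oriented chains). -/
def RedHomZeroS [LinearOrder V] (K : Set (Finset V)) (R : Type*) [Ring R] (i : ℕ) : Prop :=
  ∀ c : Finset V →₀ R, ChainOn K i c → sbd c = 0 →
    ∃ b : Finset V →₀ R, ChainOn K (i + 1) b ∧ sbd b = c

/-- Orientability of a `d`-dimensional cycle: there is a choice of signs on its `d`-faces
making the resulting ℤ-chain have zero (oriented) boundary. -/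
def Orientable [LinearOrder V] (Ω : Set (Finset V)) (d : ℕ) : Prop :=
  ∃ c : Finset V →₀ ℤ, ↑c.support = dfaces Ω d ∧
    (∀ F ∈ c.support, c F = 1 ∨ c F = -1) ∧ sbd c = 0

/-- Orientable-vertex-minimality of a cycle `Ω` in `Γ`: no orientable `d`-dimensional
cycle in `Γ` lies on a strict subset of the vertices of `Ω`. -/
def OrientVertexMinimal [LinearOrder V] (Γ Ω : Set (Finset V)) (d : ℕ) : Prop :=
  ∀ Ω', CycleIn Γ Ω' d → Orientable Ω' d → ¬ (verts Ω' ⊂ verts Ω)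

/-- `Γ` is orientably-`d`-cycle-complete: every orientably-vertex-minimal (orientable)
`d`-dimensional cycle in `Γ` is `d`-complete. -/
def OrientDCycleComplete [LinearOrder V] (Γ : Set (Finset V)) (d : ℕ) : Prop :=
  ∀ Ω, CycleIn Γ Ω d → Orientable Ω d → OrientVertexMinimal Γ Ω d → DComplete Ω d

/-- A minimal non-face of `K`: a subset of the vertex set that is not a face, all of whose
proper subsets are faces. -/
def MinNonFace (K : Set (Finset V)) (S : Finset V) : Prop :=
  ↑S ⊆ verts K ∧ S ∉ K ∧ ∀ T ⊂ S, T ∈ K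

/-! ### Auxiliary lemmas for the proof -/

section Aux

set_option linter.unusedSectionVars false

variable [LinearOrder V]

/-- The sign of a vertex in a face. -/
def sgn (F : Finset V) (v : V) : ℤ := (-1) ^ (F.filter fun w => w < v).card

lemma sbd_single' (F : Finset V) (a : ℤ) :
    sbd (Finsupp.single F a) = ∑ v ∈ F, Finsupp.single (F.erase v) (sgn F v * a) := by
  unfold sbd sgn
  rw [Finsupp.sum_single_index]
  simp

lemma sbd_add' (c c' : Finset V →₀ ℤ) :
    sbd (c + c') = sbd c + sbd c' := by
  unfold sbd
  rw [Finsupp.sum_add_index]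
  · intro F _; simp
  · intro F _ a b
    simp [mul_add, Finsupp.single_add, Finset.sum_add_distrib]

/-- The signed boundary map bundled as an additive homomorphism. -/
noncomputable def sbdHom : (Finset V →₀ ℤ) →+ (Finset V →₀ ℤ) :=
  ⟨⟨sbd, by unfold sbd; simp⟩, fun c c' => sbd_add' c c'⟩

lemma sgn_pair {S : Finset V} {v w : V} (hv : v ∈ S) (hw : w ∈ S) (hvw : v < w) :
    sgn (S.erase v) w * sgn S v + sgn (S.erase w) v * sgn S w = 0 := by
  unfold sgn
  have h1 : ((S.erase w).filter fun u => u < v) = S.filter fun u => u < v := by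
    rw [Finset.filter_erase, Finset.erase_eq_of_notMem]
    simp only [Finset.mem_filter, not_and]
    intro _; exact not_lt.2 hvw.le
  have h2 : ((S.erase v).filter fun u => u < w) = (S.filter fun u => u < w).erase v :=
    Finset.filter_erase (fun u => u < w) v S
  have hvmem : v ∈ S.filter fun u => u < w := Finset.mem_filter.2 ⟨hv, hvw⟩
  obtain ⟨m, hm⟩ : ∃ m, (S.filter fun u => u < w).card = m + 1 :=
    ⟨(S.filter fun u => u < w).card - 1, by
      have := Finset.card_pos.2 ⟨v, hvmem⟩; omega⟩
  rw [h1, h2, Finset.card_erase_of_mem hvmem, hm]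
  simp only [Nat.add_sub_cancel, pow_succ]
  ring

lemma sbd_sbd_single (S : Finset V) :
    sbd (sbd (Finsupp.single S (1 : ℤ))) = 0 := by
  rw [sbd_single']
  show sbdHom _ = 0
  rw [map_sum]
  have hterm : ∀ v ∈ S, sbdHom (Finsupp.single (S.erase v) (sgn S v * 1)) =
      ∑ w ∈ S.erase v, Finsupp.single ((S.erase v).erase w) (sgn (S.erase v) w * sgn S v) := by
    intro v _
    show sbd _ = _
    rw [mul_one, sbd_single']
  rw [Finset.sum_congr rfl hterm, Finset.sum_sigma' S (fun v => S.erase v)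
    (fun v w => Finsupp.single ((S.erase v).erase w) (sgn (S.erase v) w * sgn S v))]
  refine Finset.sum_involution (fun p _ => ⟨p.2, p.1⟩) ?_ ?_ ?_ ?_
  · rintro ⟨v, w⟩ hp
    simp only [Finset.mem_sigma, Finset.mem_erase] at hp
    obtain ⟨hv, hwv, hw⟩ := hp
    have hcomm : (S.erase v).erase w = (S.erase w).erase v := Finset.erase_right_comm
    rw [hcomm, ← Finsupp.single_add]
    rcases lt_or_gt_of_ne hwv with h | h
    · rw [Finsupp.single_eq_zero]
      linarith [sgn_pair hw hv h]
    · rw [Finsupp.single_eq_zero]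
      linarith [sgn_pair hv hw h]
  · rintro ⟨v, w⟩ hp _
    simp only [Finset.mem_sigma, Finset.mem_erase] at hp
    intro h
    injection h with h1 h2
    exact hp.2.1 h1
  · rintro ⟨v, w⟩ hp
    simp only [Finset.mem_sigma, Finset.mem_erase] at hp ⊢
    exact ⟨hp.2.2, Ne.symm hp.2.1, hp.1⟩
  · rintro ⟨v, w⟩ _; rfl

omit [LinearOrder V] in
lemma eq_erase_of_subset {S F : Finset V} (h : F ⊆ S) (hc : F.card + 1 = S.card) :
    ∃ v ∈ S, F = S.erase v := by
  have hcs : (S \ F).card = 1 := by rw [Finset.card_sdiff_of_subset h]; omega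
  obtain ⟨v, hv⟩ := Finset.card_eq_one.1 hcs
  have hvSF : v ∈ S \ F := hv ▸ Finset.mem_singleton_self v
  have hvS : v ∈ S := (Finset.mem_sdiff.1 hvSF).1
  have hvF : v ∉ F := (Finset.mem_sdiff.1 hvSF).2
  refine ⟨v, hvS, ?_⟩
  have hsub : F ⊆ S.erase v := fun x hx =>
    Finset.mem_erase.2 ⟨fun hxv => hvF (hxv ▸ hx), h hx⟩
  exact Finset.eq_of_subset_of_card_le hsub
    (by rw [Finset.card_erase_of_mem hvS]; omega)

omit [LinearOrder V] in
/-- Every `d`-dimensional cycle has at least `d+2` vertices. -/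
lemma cycle_card_verts {Ω : Set (Finset V)} {d : ℕ} (hcyc : IsCycle Ω d) :
    d + 2 ≤ (verts Ω).ncard := by
  obtain ⟨hcx, hpure, hne, hpc, heven⟩ := hcyc
  obtain ⟨F, hF⟩ := hne
  have hFc : F.card = d + 1 := hF.2
  obtain ⟨f, hfF, hfc⟩ := Finset.exists_subset_card_eq (s := F) (n := d) (by omega)
  have hfΩ : f ∈ Ω := hcx F hF.1 f hfF
  have heF := heven f hfΩ hfc
  have hFX : F ∈ {G | G ∈ dfaces Ω d ∧ f ⊆ G} := ⟨hF, hfF⟩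
  have hpos : 0 < {G | G ∈ dfaces Ω d ∧ f ⊆ G}.ncard :=
    (Set.ncard_pos (Set.toFinite _)).2 ⟨F, hFX⟩
  have h2 : 1 < {G | G ∈ dfaces Ω d ∧ f ⊆ G}.ncard := by
    obtain ⟨k, hk⟩ := heF; omega
  obtain ⟨G, hGX, hGF⟩ := Set.exists_ne_of_one_lt_ncard h2 F
  obtain ⟨x, hxG, hxF⟩ : ∃ x ∈ G, x ∉ F := by
    by_contra hcon
    push_neg at hcon
    exact hGF (Finset.eq_of_subset_of_card_le hcon (by rw [hGX.1.2, hFc]))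
  have hsub : ↑(insert x F) ⊆ verts Ω := by
    intro y hy
    rcases Finset.mem_insert.1 hy with rfl | hyF
    · exact ⟨G, hGX.1.1, hxG⟩
    · exact ⟨F, hF.1, hyF⟩
  calc d + 2 = (↑(insert x F) : Set V).ncard := by
        rw [Set.ncard_coe_finset, Finset.card_insert_of_notMem hxF, hFc]
    _ ≤ (verts Ω).ncard := Set.ncard_le_ncard hsub (Set.toFinite _)

/-- The boundary of a `(d+1)`-simplex is an orientable `d`-dimensional cycle. -/
lemma simplex_cycle (Γ : Set (Finset V)) (hΓ : IsComplex Γ) (d : ℕ) (S : Finset V)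
    (hScard : S.card = d + 2) (hfaces : ∀ T ⊆ S, T.card = d + 1 → T ∈ Γ) :
    ∃ Ωs : Set (Finset V), CycleIn Γ Ωs d ∧ Orientable Ωs d ∧ verts Ωs ⊆ ↑S := by
  set D : Set (Finset V) := {T | T ⊆ S ∧ T.card = d + 1} with hD
  have hdf : dfaces (gen D) d = D := by
    ext F
    constructor
    · rintro ⟨⟨T, hT, hFT⟩, hFc⟩
      have : F = T := Finset.eq_of_subset_of_card_le hFT (by rw [hT.2, hFc])
      exact this ▸ hT
    · intro hF
      exact ⟨⟨F, hF, subset_rfl⟩, hF.2⟩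
  refine ⟨gen D, ⟨?_, ?_, ?_, ?_, ?_, ?_⟩, ?_, ?_⟩
  · -- gen D ⊆ Γ
    rintro G ⟨T, hT, hGT⟩
    exact hΓ T (hfaces T hT.1 hT.2) G hGT
  · -- IsComplex
    rintro F ⟨T, hT, hFT⟩ G hGF
    exact ⟨T, hT, hGF.trans hFT⟩
  · -- IsPureD
    rintro F ⟨T, hT, hFT⟩
    exact ⟨T, by rw [hdf]; exact hT, hFT⟩
  · -- Nonempty
    obtain ⟨T, hTS, hTc⟩ := Finset.exists_subset_card_eq (s := S) (n := d + 1) (by omega)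
    exact ⟨T, by rw [hdf]; exact ⟨hTS, hTc⟩⟩
  · -- PathConn
    intro F hF G hG
    rw [hdf] at hF hG
    by_cases hFG : F = G
    · subst hFG; exact Relation.ReflTransGen.refl
    · have hFc := hF.2
      have hGc := hG.2
      have hU : (F ∪ G).card ≤ d + 2 :=
        le_trans (Finset.card_le_card (Finset.union_subset hF.1 hG.1)) (le_of_eq hScard)
      have hUI := Finset.card_union_add_card_inter F G
      have hle : (F ∩ G).card ≤ d := by
        by_contra hcon
        push_neg at hcon
        have hFi : F ∩ G = F :=
          Finset.eq_of_subset_of_card_le Finset.inter_subset_left (by omega)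
        have hFsub : F ⊆ G := hFi ▸ Finset.inter_subset_right
        exact hFG (Finset.eq_of_subset_of_card_le hFsub (by omega))
      refine Relation.ReflTransGen.single ⟨?_, ?_, by omega⟩
      · rw [hdf]; exact hF
      · rw [hdf]; exact hG
  · -- even condition
    intro f hf hfc
    obtain ⟨T, hT, hfT⟩ := hf
    have hfS : f ⊆ S := hfT.trans hT.1
    have hXeq : {F | F ∈ dfaces (gen D) d ∧ f ⊆ F} =
        ↑((S \ f).image fun x => insert x f) := by
      ext F
      simp only [Set.mem_setOf_eq, Finset.coe_image, Set.mem_image, Finset.mem_coe,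
        Finset.mem_sdiff]
      constructor
      · rintro ⟨hF, hfF⟩
        rw [hdf] at hF
        have hcd : (F \ f).card = 1 := by rw [Finset.card_sdiff_of_subset hfF, hF.2, hfc]; omega
        obtain ⟨x, hx⟩ := Finset.card_eq_one.1 hcd
        have hxF : x ∈ F \ f := hx ▸ Finset.mem_singleton_self x
        refine ⟨x, ⟨hF.1 (Finset.mem_sdiff.1 hxF).1, (Finset.mem_sdiff.1 hxF).2⟩, ?_⟩
        have hun := Finset.union_sdiff_of_subset hfF
        rw [hx] at hun
        rw [← hun]
        ext y
        simp only [Finset.mem_insert, Finset.mem_union, Finset.mem_singleton]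
        tauto
      · rintro ⟨x, ⟨hxS, hxf⟩, rfl⟩
        constructor
        · rw [hdf]
          exact ⟨Finset.insert_subset hxS hfS,
            by rw [Finset.card_insert_of_notMem hxf, hfc]⟩
        · exact Finset.subset_insert x f
    have hinj : Set.InjOn (fun x => insert x f) ↑(S \ f) := by
      intro x hx y hy hxy
      have hxf := (Finset.mem_sdiff.1 (Finset.mem_coe.1 hx)).2
      have hxy' : insert x f = insert y f := hxy
      have hmem : x ∈ insert y f := hxy' ▸ Finset.mem_insert_self x f
      rcases Finset.mem_insert.1 hmem with h | h
      · exact h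
      · exact absurd h hxf
    rw [hXeq, Set.ncard_coe_finset, Finset.card_image_of_injOn hinj,
      Finset.card_sdiff_of_subset hfS, hScard, hfc]
    exact ⟨1, by omega⟩
  · -- Orientable
    set c : Finset V →₀ ℤ := ∑ v ∈ S, Finsupp.single (S.erase v) (sgn S v) with hc
    have hcbd : c = sbd (Finsupp.single S (1 : ℤ)) := by
      rw [sbd_single', hc]
      simp
    have heval : ∀ v ∈ S, c (S.erase v) = sgn S v := by
      intro v hv
      rw [hc, Finsupp.finset_sum_apply]
      refine (Finset.sum_eq_single_of_mem v hv ?_).trans Finsupp.single_eq_same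
      intro u hu huv
      rw [Finsupp.single_apply]
      refine if_neg fun h => ?_
      have hvmem : v ∈ S.erase u := Finset.mem_erase.2 ⟨fun hvu => huv hvu.symm, hv⟩
      rw [h] at hvmem
      exact (Finset.notMem_erase v S) hvmem
    have hzero : ∀ T, T ∉ D → c T = 0 := by
      intro T hT
      rw [hc, Finsupp.finset_sum_apply]
      apply Finset.sum_eq_zero
      intro u hu
      rw [Finsupp.single_apply]
      refine if_neg fun h => ?_
      apply hT
      rw [← h]
      refine ⟨Finset.erase_subset _ _, ?_⟩
      rw [Finset.card_erase_of_mem hu, hScard]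
      omega
    have hsgn_ne : ∀ v, sgn S v ≠ 0 := fun v => pow_ne_zero _ (by norm_num)
    have hsupp : ↑c.support = dfaces (gen D) d := by
      rw [hdf]
      ext T
      simp only [Finset.mem_coe, Finsupp.mem_support_iff]
      constructor
      · intro h
        by_contra hT
        exact h (hzero T hT)
      · intro hT
        have hTc := hT.2
        obtain ⟨v, hv, rfl⟩ := eq_erase_of_subset hT.1 (by omega)
        rw [heval v hv]
        exact hsgn_ne v
    refine ⟨c, hsupp, ?_, ?_⟩
    · intro F hF
      have hFD : F ∈ D := by
        have : F ∈ (↑c.support : Set (Finset V)) := hF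
        rw [hsupp, hdf] at this
        exact this
      have hFc := hFD.2
      obtain ⟨v, hv, rfl⟩ := eq_erase_of_subset hFD.1 (by omega)
      rw [heval v hv]
      exact neg_one_pow_eq_or ℤ _
    · rw [hcbd]
      exact sbd_sbd_single S
  · -- verts ⊆ S
    rintro v ⟨F, ⟨T, hT, hFT⟩, hvF⟩
    exact hT.1 (hFT hvF)

end Aux

/-- Proposition 4.9.2: any `d`-cycle-complete simplicial complex is
orientably-`d`-cycle-complete. -/
theorem dCycleComplete_orientDCycleComplete {V : Type*} [DecidableEq V] [Fintype V]
    [LinearOrder V] (Γ : Set (Finset V)) (d : ℕ)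
    (hcomplex : IsComplex Γ) (hpure : IsPureD Γ d) (hcc : DCycleComplete Γ d) :
    OrientDCycleComplete Γ d := by
  intro Ω hΩcyc hΩor hΩmin
  set A : Set ℕ :=
    {k | ∃ Ω', CycleIn Γ Ω' d ∧ verts Ω' ⊆ verts Ω ∧ (verts Ω').ncard = k} with hA
  have hAne : A.Nonempty := ⟨(verts Ω).ncard, Ω, hΩcyc, subset_rfl, rfl⟩
  obtain ⟨Ω', hΩ', hsub, hk⟩ := Nat.sInf_mem hAne
  rcases hsub.ssubset_or_eq with hss | heq
  · -- impossible: build a small orientable simplex-boundary cycle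
    exfalso
    have hmin' : VertexMinimal Γ Ω' d := by
      intro Ω'' h'' hss''
      have hmem : (verts Ω'').ncard ∈ A := ⟨Ω'', h'', hss''.subset.trans hsub, rfl⟩
      have h1 := Nat.sInf_le hmem
      have h2 : (verts Ω'').ncard < (verts Ω').ncard :=
        Set.ncard_lt_ncard hss'' (Set.toFinite _)
      omega
    have hdc : DComplete Ω' d := hcc Ω' hΩ' hmin'
    have hge : d + 2 ≤ (verts Ω').ncard := cycle_card_verts hΩ'.2
    have hfin : (verts Ω').Finite := Set.toFinite _
    obtain ⟨S, hSsub, hScard⟩ := Finset.exists_subset_card_eq (s := hfin.toFinset) (n := d + 2)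
      (by rwa [Set.ncard_eq_toFinset_card _ hfin] at hge)
    have hSv : ↑S ⊆ verts Ω' := by
      intro x hx
      exact hfin.mem_toFinset.1 (hSsub hx)
    obtain ⟨Ωs, hΩscyc, hΩsor, hΩsverts⟩ := simplex_cycle Γ hcomplex d S hScard
      (fun T hT hTc => hΩ'.1 (hdc T (Set.Subset.trans (Finset.coe_subset.2 hT) hSv) hTc))
    exact hΩmin Ωs hΩscyc hΩsor
      (lt_of_le_of_lt (hΩsverts.trans hSv) hss)
  · -- Ω itself is vertex-minimal
    have hmin : VertexMinimal Γ Ω d := by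
      intro Ω'' h'' hss''
      have hmem : (verts Ω'').ncard ∈ A := ⟨Ω'', h'', hss''.subset, rfl⟩
      have h1 := Nat.sInf_le hmem
      have h2 : (verts Ω'').ncard < (verts Ω).ncard :=
        Set.ncard_lt_ncard hss'' (Set.toFinite _)
      rw [← heq] at h2
      omega
    exact hcc Ω hΩcyc hmin

end ChordedPaper
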